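/- Let m > 0 and C₀ > 0. Suppose S is a finite multiset of real numbers in (0,1] such that for every δ > 0, the number of elements of S greater than δ is at most C₀·δ^{-m}. Then ∑_{s∈S} s^m ≤ D₁·(1 + log₂(1 + |S|)) for some constant D₁ depending only on C₀ and m. -/

import Mathlib

open Real Filter List

theorem stmt_1 (m C₀ : ℝ) (hm : 0 < m) (hC₀ : 0 < C₀) :
    ∃ D₁ : ℝ, 0 < D₁ ∧
      ∀ S : Multiset ℝ,
        (∀ s ∈ S, 0 < s) → (∀ s ∈ S, s ≤ 1) →
        (∀ δ : ℝ, 0 < δ →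
          ((S.filter (fun s => δ < s)).card : ℝ) ≤ C₀ * δ ^ (-m)) →
        (S.map (fun s => s ^ m)).sum ≤ D₁ * (1 + Real.logb 2 (1 + (S.card : ℝ))) := by
  classical
  refine ⟨C₀, hC₀, ?_⟩
  intro S hpos hle hcount
  set l := S.sort (· ≥ ·) with hldef
  have hSl : (l : Multiset ℝ) = S := S.sort_eq _
  have hsorted : l.Pairwise (· ≥ ·) := S.pairwise_sort _
  set n := l.length with hn
  have hcard : S.card = n := by rw [← hSl]; rfl
  -- key pointwise bound
  have key : ∀ j : Fin n, l.get j ^ m ≤ C₀ / ((j : ℝ) + 1) := by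
    intro j
    have hsmem : l.get j ∈ S := by
      rw [← hSl]; exact Multiset.mem_coe.mpr (List.get_mem l j)
    have hs : 0 < l.get j := hpos _ hsmem
    set s := l.get j with hsdef
    -- j+1 ≤ C₀ * δ^(-m) for δ ∈ (0, s)
    have hstep : ∀ δ : ℝ, 0 < δ → δ < s → ((j : ℝ) + 1) ≤ C₀ * δ ^ (-m) := by
      intro δ hδ hδs
      refine le_trans ?_ (hcount δ hδ)
      -- card of filter ≥ j+1
      have hfil : ((S.filter (fun t => δ < t)).card : ℝ) =
          ((l.filter (fun t => δ < t)).length : ℝ) := by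
        rw [← hSl]; norm_cast
      rw [hfil]
      have htake : (l.take (j + 1)).filter (fun t => δ < t) = l.take (j + 1) := by
        apply List.filter_eq_self.mpr
        intro t ht
        rw [List.mem_take_iff_getElem] at ht
        obtain ⟨i, hi, rfl⟩ := ht
        have hij : i ≤ (j : ℕ) := by omega
        have : s ≤ l[i] := by
          have := hsorted.rel_get_of_le (a := ⟨i, lt_of_lt_of_le hi (by simp [min_le_right])⟩)
            (b := j) (by exact hij)
          simpa [List.get_eq_getElem, hsdef] using this
        simpa using lt_of_lt_of_le hδs this
      have hlen : (j : ℕ) + 1 ≤ (l.filter (fun t => δ < t)).length := by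
        have hsub : (l.take (j + 1)).filter (fun t => δ < t) <+ l.filter (fun t => δ < t) :=
          (List.take_sublist _ _).filter _
        have := hsub.length_le
        rw [htake, List.length_take] at this
        have hjn : (j : ℕ) + 1 ≤ n := j.2
        omega
      calc ((j : ℝ) + 1) ≤ ((l.filter (fun t => δ < t)).length : ℝ) := by
            exact_mod_cast hlen
        _ ≤ _ := le_refl _
    -- pass to the limit δ → s⁻
    have hlim : Tendsto (fun δ : ℝ => C₀ * δ ^ (-m)) (nhdsWithin s (Set.Iio s))
        (nhds (C₀ * s ^ (-m))) := by
      have hc : ContinuousAt (fun δ : ℝ => C₀ * δ ^ (-m)) s :=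
        continuousAt_const.mul (Real.continuousAt_rpow_const s (-m) (Or.inl hs.ne'))
      exact hc.tendsto.mono_left nhdsWithin_le_nhds
    have hev : ∀ᶠ δ in nhdsWithin s (Set.Iio s), ((j : ℝ) + 1) ≤ C₀ * δ ^ (-m) := by
      have h1 : ∀ᶠ δ in nhdsWithin s (Set.Iio s), 0 < δ :=
        eventually_nhdsWithin_of_eventually_nhds (eventually_gt_nhds hs)
      have h2 : ∀ᶠ δ in nhdsWithin s (Set.Iio s), δ < s := eventually_mem_nhdsWithin
      filter_upwards [h1, h2] with δ hδ1 hδ2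
      exact hstep δ hδ1 hδ2
    have hlimle : ((j : ℝ) + 1) ≤ C₀ * s ^ (-m) := ge_of_tendsto hlim hev
    -- conclude
    have hsm : (0 : ℝ) < s ^ m := Real.rpow_pos_of_pos hs m
    rw [le_div_iff₀ (by positivity)]
    calc s ^ m * ((j : ℝ) + 1) ≤ s ^ m * (C₀ * s ^ (-m)) := by
          apply mul_le_mul_of_nonneg_left hlimle hsm.le
      _ = C₀ * (s ^ m * s ^ (-m)) := by ring
      _ = C₀ := by
          rw [← Real.rpow_add hs]; simp
  -- sum over the list
  have hsum : (S.map (fun s => s ^ m)).sum = ∑ j : Fin n, l.get j ^ m := by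
    rw [← hSl]
    rw [show ((l : Multiset ℝ).map (fun s => s ^ m)).sum = (l.map (fun s => s ^ m)).sum from rfl]
    rw [← List.ofFn_getElem_eq_map l (fun s => s ^ m), List.sum_ofFn]
    simp [List.get_eq_getElem]
    rfl
  have hharm : (∑ j : Fin n, l.get j ^ m) ≤ C₀ * (harmonic n : ℝ) := by
    calc (∑ j : Fin n, l.get j ^ m) ≤ ∑ j : Fin n, C₀ / ((j : ℝ) + 1) :=
          Finset.sum_le_sum fun j _ => key j
      _ = C₀ * (harmonic n : ℝ) := by
          rw [harmonic]
          push_cast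
          rw [Finset.mul_sum, ← Fin.sum_univ_eq_sum_range (f := fun i => C₀ * ((i : ℝ) + 1)⁻¹)]
          exact Finset.sum_congr rfl fun j _ => (div_eq_mul_inv _ _)
  have hlog : (harmonic n : ℝ) ≤ 1 + Real.logb 2 (1 + (n : ℝ)) := by
    rcases Nat.eq_zero_or_pos n with h0 | h1
    · rw [h0]; norm_num [Real.logb]
    · refine (harmonic_le_one_add_log n).trans ?_
      have hlb : Real.log n ≤ Real.logb 2 (1 + (n : ℝ)) := by
        have h2 : Real.log n ≤ Real.log (1 + (n : ℝ)) :=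
          Real.log_le_log (by exact_mod_cast h1) (by linarith)
        have hlog2 : (0:ℝ) < Real.log 2 := Real.log_pos (by norm_num)
        have h3 : Real.log (1 + (n : ℝ)) = Real.log 2 * Real.logb 2 (1 + (n : ℝ)) := by
          rw [Real.logb]; field_simp
        have h4 : 0 ≤ Real.logb 2 (1 + (n : ℝ)) :=
          Real.logb_nonneg (by norm_num)
            (by linarith [(Nat.cast_nonneg n : (0:ℝ) ≤ n)])
        have h5 : Real.log 2 ≤ 1 := by
          have := Real.log_le_sub_one_of_pos (by norm_num : (0:ℝ) < 2)
          linarith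
        nlinarith [h2, h3, h4, h5]
      linarith
  rw [hsum, hcard]
  calc (∑ j : Fin n, l.get j ^ m) ≤ C₀ * (harmonic n : ℝ) := hharm
    _ ≤ C₀ * (1 + Real.logb 2 (1 + (n : ℝ))) := by
        apply mul_le_mul_of_nonneg_left hlog hC₀.le
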